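/- Let v₁ = s₁·(1+e^{iα₁}, e^{iβ₁}(1-e^{iα₁}))ᵀ and v₂ = s₂·(1+e^{iα₂}, e^{iβ₂}(1-e^{iα₂}))ᵀ be nonzero vectors in ℂ² with s₁, s₂ ∈ ℂ, β₁, β₂ ∈ [0, π), α₁, α₂ ∈ [0, 2π). If v₁ = v₂, then either (α₁ ≡ α₂ mod 2π and α₁ ≡ 0 mod π), or (α₁ = α₂ and β₁ = β₂). -/
import Mathlib
open Complex Real

lemma exp_eq_exp_real {a b : ℝ} (h : Complex.exp (a * Complex.I) = Complex.exp (b * Complex.I)) :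
    ∃ k : ℤ, a - b = k * (2 * Real.pi) := by
  rw [Complex.exp_eq_exp_iff_exists_int] at h
  obtain ⟨n, hn⟩ := h
  refine ⟨n, ?_⟩
  have h2 : ((a : ℂ)) * Complex.I = ((b + n * (2*Real.pi) : ℝ) : ℂ) * Complex.I := by
    push_cast
    rw [hn]; ring
  have h3 : (a : ℂ) = ((b + n * (2*Real.pi) : ℝ) : ℂ) :=
    mul_right_cancel₀ Complex.I_ne_zero h2
  have h4 : a = b + n * (2*Real.pi) := by exact_mod_cast h3
  linarith

lemma sin_eq_zero_abs_lt {x : ℝ} (h : Real.sin x = 0) (hx : |x| < Real.pi) : x = 0 := by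
  obtain ⟨n, hn⟩ := Real.sin_eq_zero_iff.mp h
  have hπ := Real.pi_pos
  have h1 : |(n:ℝ)| * Real.pi < Real.pi := by
    have habs : |x| = |(n:ℝ)| * Real.pi := by rw [← hn, abs_mul, abs_of_pos hπ]
    linarith [habs ▸ hx]
  have hn1 : |(n:ℝ)| < 1 := by
    by_contra hle
    push_neg at hle
    nlinarith
  have hn0 : n = 0 := by
    rw [← Int.abs_lt_one_iff]
    exact_mod_cast hn1
  simp [hn0] at hn; linarith

lemma one_add_exp (γ : ℝ) :
    1 + Complex.exp ((2*γ : ℝ) * Complex.I) = 2 * Real.cos γ * Complex.exp (γ * Complex.I) := by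
  rw [Complex.ofReal_cos, show ((2*γ:ℝ):ℂ) = 2*(γ:ℂ) by push_cast; ring]
  have h := Complex.two_cos (γ:ℂ)
  have he : Complex.exp (-(γ:ℂ) * Complex.I) * Complex.exp ((γ:ℂ) * Complex.I) = 1 := by
    rw [← Complex.exp_add]; ring_nf; exact Complex.exp_zero
  have h2 : Complex.exp (2*(γ:ℂ) * Complex.I) =
      Complex.exp ((γ:ℂ) * Complex.I) * Complex.exp ((γ:ℂ) * Complex.I) := by
    rw [← Complex.exp_add]; ring_nf
  rw [h2]
  linear_combination (-Complex.exp ((γ:ℂ) * Complex.I)) * h - he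

lemma one_sub_exp (γ : ℝ) :
    1 - Complex.exp ((2*γ : ℝ) * Complex.I) =
      -2 * Complex.I * Real.sin γ * Complex.exp (γ * Complex.I) := by
  rw [Complex.ofReal_sin, show ((2*γ:ℝ):ℂ) = 2*(γ:ℂ) by push_cast; ring]
  have h := Complex.two_sin (γ:ℂ)
  have he : Complex.exp (-(γ:ℂ) * Complex.I) * Complex.exp ((γ:ℂ) * Complex.I) = 1 := by
    rw [← Complex.exp_add]; ring_nf; exact Complex.exp_zero
  have h2 : Complex.exp (2*(γ:ℂ) * Complex.I) =
      Complex.exp ((γ:ℂ) * Complex.I) * Complex.exp ((γ:ℂ) * Complex.I) := by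
    rw [← Complex.exp_add]; ring_nf
  have hI : Complex.I * Complex.I = -1 := Complex.I_mul_I
  rw [h2]
  linear_combination (Complex.exp ((γ:ℂ)*Complex.I) * Complex.I) * h
    + (Complex.exp (-(γ:ℂ)*Complex.I) * Complex.exp ((γ:ℂ)*Complex.I)
        - Complex.exp ((γ:ℂ)*Complex.I) * Complex.exp ((γ:ℂ)*Complex.I)) * hI - he

theorem state_svd_unique (s₁ s₂ : ℂ) (α₁ α₂ β₁ β₂ : ℝ)
    (hs₁ : s₁ ≠ 0) (hs₂ : s₂ ≠ 0)
    (hβ₁ : β₁ ∈ Set.Ico 0 Real.pi) (hβ₂ : β₂ ∈ Set.Ico 0 Real.pi)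
    (hα₁ : α₁ ∈ Set.Ico 0 (2 * Real.pi)) (hα₂ : α₂ ∈ Set.Ico 0 (2 * Real.pi))
    (hv : s₁ • ![1 + Complex.exp (α₁ * Complex.I),
          Complex.exp (β₁ * Complex.I) * (1 - Complex.exp (α₁ * Complex.I))] =
        s₂ • ![1 + Complex.exp (α₂ * Complex.I),
          Complex.exp (β₂ * Complex.I) * (1 - Complex.exp (α₂ * Complex.I))]) :
    ((∃ k : ℤ, α₁ - α₂ = k * (2 * Real.pi)) ∧ ∃ m : ℤ, α₁ = m * Real.pi) ∨
      (α₁ = α₂ ∧ β₁ = β₂) := by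
  have h0 : s₁ * (1 + Complex.exp (α₁ * Complex.I)) =
      s₂ * (1 + Complex.exp (α₂ * Complex.I)) := by
    have := congr_fun hv 0; simpa using this
  have h1 : s₁ * (Complex.exp (β₁ * Complex.I) * (1 - Complex.exp (α₁ * Complex.I))) =
      s₂ * (Complex.exp (β₂ * Complex.I) * (1 - Complex.exp (α₂ * Complex.I))) := by
    have := congr_fun hv 1; simpa using this
  have key1 : ∀ α : ℝ, 1 + Complex.exp (↑α * Complex.I)
      = 2 * Real.cos (α/2) * Complex.exp (↑(α/2) * Complex.I) := by
    intro α
    have := one_add_exp (α/2)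
    rw [show (2*(α/2):ℝ) = α by ring] at this
    exact this
  have key2 : ∀ α : ℝ, 1 - Complex.exp (↑α * Complex.I)
      = -2 * Complex.I * Real.sin (α/2) * Complex.exp (↑(α/2) * Complex.I) := by
    intro α
    have := one_sub_exp (α/2)
    rw [show (2*(α/2):ℝ) = α by ring] at this
    exact this
  by_cases hm1 : Complex.exp (↑α₁ * Complex.I) = -1
  · -- α₁ = π case
    have h2 : s₂ * (1 + Complex.exp (↑α₂ * Complex.I)) = 0 := by
      rw [← h0, hm1]; ring
    have h3 : Complex.exp (↑α₂ * Complex.I) = -1 := by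
      rcases mul_eq_zero.mp h2 with h | h
      · exact absurd h hs₂
      · linear_combination h
    left
    constructor
    · exact exp_eq_exp_real (hm1.trans h3.symm)
    · have : Complex.exp (↑α₁ * Complex.I) = Complex.exp (↑Real.pi * Complex.I) := by
        rw [hm1, Complex.exp_pi_mul_I]
      obtain ⟨k, hk⟩ := exp_eq_exp_real this
      exact ⟨2*k+1, by push_cast; linarith⟩
  by_cases hp1 : Complex.exp (↑α₁ * Complex.I) = 1
  · -- α₁ = 0 case
    have h2 : s₂ * (Complex.exp (↑β₂ * Complex.I) * (1 - Complex.exp (↑α₂ * Complex.I))) = 0 := by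
      rw [← h1, hp1]; ring
    have h3 : Complex.exp (↑α₂ * Complex.I) = 1 := by
      rcases mul_eq_zero.mp h2 with h | h
      · exact absurd h hs₂
      rcases mul_eq_zero.mp h with h | h
      · exact absurd h (Complex.exp_ne_zero _)
      · linear_combination -h
    have e0 : Complex.exp ((0:ℝ) * Complex.I) = 1 := by simp
    left
    constructor
    · exact exp_eq_exp_real (hp1.trans h3.symm)
    · obtain ⟨k, hk⟩ := exp_eq_exp_real (hp1.trans e0.symm)
      exact ⟨2*k, by push_cast; linarith⟩
  -- main case
  right
  have hne1a : 1 + Complex.exp (↑α₁ * Complex.I) ≠ 0 := fun h => hm1 (by linear_combination h)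
  have hne1s : 1 - Complex.exp (↑α₁ * Complex.I) ≠ 0 := fun h => hp1 (by linear_combination -h)
  have hne2a : 1 + Complex.exp (↑α₂ * Complex.I) ≠ 0 := by
    intro h
    exact mul_ne_zero hs₁ hne1a (by rw [h0, h, mul_zero])
  have hne2s : 1 - Complex.exp (↑α₂ * Complex.I) ≠ 0 := by
    intro h
    exact mul_ne_zero hs₁ (mul_ne_zero (Complex.exp_ne_zero _) hne1s)
      (by rw [h1, h, mul_zero, mul_zero])
  have hcos1 : Real.cos (α₁/2) ≠ 0 := by
    intro h
    apply hne1a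
    rw [key1 α₁, h]; push_cast; ring
  have hsin2 : Real.sin (α₂/2) ≠ 0 := by
    intro h
    apply hne2s
    rw [key2 α₂, h]; push_cast; ring
  rw [key1 α₁, key1 α₂] at h0
  rw [key2 α₁, key2 α₂] at h1
  have h1' : s₁ * Complex.exp (↑β₁ * Complex.I) * Real.sin (α₁/2) * Complex.exp (↑(α₁/2) * Complex.I)
      = s₂ * Complex.exp (↑β₂ * Complex.I) * Real.sin (α₂/2) * Complex.exp (↑(α₂/2) * Complex.I) := by
    have hne : (-2*Complex.I : ℂ) ≠ 0 := by simp [Complex.I_ne_zero]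
    apply mul_left_cancel₀ hne
    linear_combination h1
  have hA : s₁ * Complex.exp (↑(α₁/2) * Complex.I) ≠ 0 :=
    mul_ne_zero hs₁ (Complex.exp_ne_zero _)
  have hE : (Real.cos (α₁/2) : ℂ) * Real.sin (α₂/2) * Complex.exp (↑β₂ * Complex.I)
      = (Real.cos (α₂/2) : ℂ) * Real.sin (α₁/2) * Complex.exp (↑β₁ * Complex.I) := by
    apply mul_left_cancel₀ hA
    linear_combination ((Real.sin (α₂/2) : ℂ) * Complex.exp (↑β₂ * Complex.I) / 2) * h0
      - (Real.cos (α₂/2) : ℂ) * h1'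
  have hE2 : (Real.cos (α₁/2) : ℂ) * (Real.sin (α₂/2) : ℂ) * Complex.exp (↑(β₂ - β₁) * Complex.I)
      = (Real.cos (α₂/2) : ℂ) * (Real.sin (α₁/2) : ℂ) := by
    have hb : Complex.exp (↑β₁ * Complex.I) ≠ 0 := Complex.exp_ne_zero _
    apply mul_right_cancel₀ hb
    have he : Complex.exp (↑(β₂ - β₁) * Complex.I) * Complex.exp (↑β₁ * Complex.I)
        = Complex.exp (↑β₂ * Complex.I) := by
      rw [← Complex.exp_add]; push_cast; ring_nf
    linear_combination hE + (Real.cos (α₁/2) : ℂ) * (Real.sin (α₂/2) : ℂ) * he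
  have hE2' : ((Real.cos (α₁/2) * Real.sin (α₂/2) : ℝ) : ℂ) * Complex.exp (↑(β₂ - β₁) * Complex.I)
      = ((Real.cos (α₂/2) * Real.sin (α₁/2) : ℝ) : ℂ) := by
    rw [Complex.ofReal_mul, Complex.ofReal_mul]; exact hE2
  have him := congrArg Complex.im hE2'
  simp only [Complex.mul_im, Complex.ofReal_re, Complex.ofReal_im,
    Complex.exp_ofReal_mul_I_im, Complex.exp_ofReal_mul_I_re, zero_mul, mul_zero,
    add_zero, zero_add] at him
  have hsδ : Real.sin (β₂ - β₁) = 0 := by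
    rcases mul_eq_zero.mp him with h | h
    · exact absurd h (mul_ne_zero hcos1 hsin2)
    · exact h
  have hπ := Real.pi_pos
  obtain ⟨hβ₁0, hβ₁π⟩ := hβ₁
  obtain ⟨hβ₂0, hβ₂π⟩ := hβ₂
  have hβeq : β₂ - β₁ = 0 :=
    sin_eq_zero_abs_lt hsδ (abs_lt.mpr ⟨by linarith, by linarith⟩)
  rw [hβeq] at hE2
  simp only [Complex.ofReal_zero, zero_mul, Complex.exp_zero, mul_one] at hE2
  have hreq : Real.cos (α₁/2) * Real.sin (α₂/2) = Real.cos (α₂/2) * Real.sin (α₁/2) := by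
    exact_mod_cast hE2
  have hsα : Real.sin (α₂/2 - α₁/2) = 0 := by
    rw [Real.sin_sub]; linarith
  obtain ⟨hα₁0, hα₁π⟩ := hα₁
  obtain ⟨hα₂0, hα₂π⟩ := hα₂
  have hαeq : α₂/2 - α₁/2 = 0 :=
    sin_eq_zero_abs_lt hsα (abs_lt.mpr ⟨by linarith, by linarith⟩)
  constructor
  · linarith
  · linarith
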